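/- Let l be an odd prime and K a number field with K ∩ ℚ(ζ_l) = ℚ(ζ_l)^+, so that H = Gal(K(ζ_l)/K) is identified with the order-2 subgroup {σ_1, σ_{−1}} of Δ_l. Then the Stickelberger ideal 𝒥_l annihilates the induced ℤ[Δ_l]-module ℤ[Δ_l] ⊗_{ℤ[H]} Cl(K(ζ_l)) (where Cl(K(ζ_l)) is a ℤ[H]-module via Galois action) if and only if h_{K(ζ_l)} = 1. (Equivalently: such K is C_l-Leopoldt if and only if h_{K(ζ_l)} = 1.) -/

import Mathlib

open scoped NumberField nonZeroDivisors
open NumberField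

noncomputable section

/-- The Stickelberger element `θ_l ∈ ℚ[(ℤ/l)ˣ]`. -/
def stickElt (l : ℕ) [NeZero l] : MonoidAlgebra ℚ (ZMod l)ˣ :=
  (l : ℚ)⁻¹ • ∑ a : (ZMod l)ˣ, MonoidAlgebra.single a⁻¹ (((a : ZMod l).val : ℚ))

/-- The canonical map `ℤ[(ℤ/l)ˣ] → ℚ[(ℤ/l)ˣ]`. -/
def zqMap (l : ℕ) : MonoidAlgebra ℤ (ZMod l)ˣ →ₐ[ℤ] MonoidAlgebra ℚ (ZMod l)ˣ :=
  MonoidAlgebra.lift ℤ _ (ZMod l)ˣ (MonoidAlgebra.of ℚ (ZMod l)ˣ)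

/-- The Stickelberger ideal `𝒥_l = ℤ[Δ_l]·θ_l ∩ ℤ[Δ_l]`. -/
def stickIdeal (l : ℕ) [NeZero l] : Set (MonoidAlgebra ℤ (ZMod l)ˣ) :=
  {x | ∃ y : MonoidAlgebra ℤ (ZMod l)ˣ, zqMap l y * stickElt l = zqMap l x}

/-- `act` is the natural action of `Gal(L/K)` on the class group of `L`. -/
def IsClassGroupGalAct (K L : Type*) [Field K] [Field L] [NumberField L] [Algebra K L]
    (act : (L ≃ₐ[K] L) → ClassGroup (𝓞 L) → ClassGroup (𝓞 L)) : Prop :=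
  ∀ (σ : L ≃ₐ[K] L) (I : (Ideal (𝓞 L))⁰)
    (hI : Ideal.map (RingOfIntegers.mapRingEquiv σ : 𝓞 L ≃+* 𝓞 L).toRingHom
        (I : Ideal (𝓞 L)) ∈ (Ideal (𝓞 L))⁰),
    act σ (ClassGroup.mk0 I) = ClassGroup.mk0 ⟨_, hI⟩

section Aux

variable {l : ℕ} [Fact (Nat.Prime l)] [NeZero l]

lemma zqMap_single (a : (ZMod l)ˣ) (n : ℤ) :
    zqMap l (MonoidAlgebra.single a n) = MonoidAlgebra.single a (n : ℚ) := by
  rw [zqMap, MonoidAlgebra.lift_single, MonoidAlgebra.of_apply]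
  rw [MonoidAlgebra.smul_single]
  norm_num

/-- The auxiliary element `x = θ₂ = (2 - σ₂)θ` of the Stickelberger ideal. -/
def auxElt (l : ℕ) [NeZero l] : MonoidAlgebra ℤ (ZMod l)ˣ :=
  ∑ b : (ZMod l)ˣ, MonoidAlgebra.single b⁻¹
    (if l ≤ 2 * ((b : ZMod l)).val then (1 : ℤ) else 0)

lemma auxElt_apply (a : (ZMod l)ˣ) :
    (auxElt l).coeff a = if l ≤ 2 * (((a⁻¹ : (ZMod l)ˣ) : ZMod l)).val then (1 : ℤ) else 0 := by
  classical
  rw [auxElt]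
  simp only [MonoidAlgebra.coeff_sum, MonoidAlgebra.coeff_single]
  rw [Finsupp.finset_sum_apply, Finset.sum_eq_single a⁻¹]
  · rw [Finsupp.single_apply, if_pos (inv_inv a)]
  · intro b _ hb
    rw [Finsupp.single_apply, if_neg]
    intro h
    exact hb (by rw [← h, inv_inv])
  · intro h; exact absurd (Finset.mem_univ _) h

lemma odd_prime_three_le (hl : Odd l) : 3 ≤ l := by
  have h2 := (Fact.out : l.Prime).two_le
  rcases hl with ⟨k, hk⟩
  omega

lemma auxElt_mem (hl : Odd l) : auxElt l ∈ stickIdeal l := by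
  classical
  have hl3 : 3 ≤ l := odd_prime_three_le hl
  have hcop : Nat.Coprime 2 l :=
    (Nat.prime_two.coprime_iff_not_dvd).mpr (by
      intro h
      have h1 := Nat.odd_iff.mp hl
      omega)
  set u2 : (ZMod l)ˣ := ZMod.unitOfCoprime 2 hcop with hu2def
  have hu2 : ((u2 : (ZMod l)ˣ) : ZMod l) = 2 := by
    rw [hu2def, ZMod.coe_unitOfCoprime]; push_cast; ring
  have hval2 : (2 : ZMod l).val = 2 := by
    have : ((2 : ℕ) : ZMod l) = (2 : ZMod l) := by push_cast; ring
    rw [← this, ZMod.val_natCast, Nat.mod_eq_of_lt (by omega)]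
  -- the value of `val (b * u2)`
  have hvalmul : ∀ b : (ZMod l)ˣ,
      (((b * u2 : (ZMod l)ˣ) : ZMod l)).val = ((b : ZMod l).val * 2) % l := by
    intro b
    rw [Units.val_mul, hu2, ZMod.val_mul, hval2]
  refine ⟨MonoidAlgebra.single 1 2 - MonoidAlgebra.single u2 1, ?_⟩
  rw [map_sub, zqMap_single, zqMap_single,
    show ((2 : ℤ) : ℚ) = 2 from by norm_num, show ((1 : ℤ) : ℚ) = 1 from by norm_num]
  rw [auxElt, map_sum]
  have hrhs : ∀ b : (ZMod l)ˣ,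
      zqMap l (MonoidAlgebra.single b⁻¹ (if l ≤ 2 * ((b : ZMod l)).val then (1 : ℤ) else 0))
      = MonoidAlgebra.single b⁻¹ ((if l ≤ 2 * ((b : ZMod l)).val then (1 : ℚ) else 0)) := by
    intro b
    rw [zqMap_single]
    congr 1
    split <;> norm_num
  rw [Finset.sum_congr rfl (fun b _ => hrhs b)]
  rw [stickElt, mul_smul_comm, Finset.mul_sum]
  have hterm : ∀ a : (ZMod l)ˣ,
      (MonoidAlgebra.single (1 : (ZMod l)ˣ) (2:ℚ) - MonoidAlgebra.single u2 1) *
        MonoidAlgebra.single a⁻¹ (((a : ZMod l).val : ℚ))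
      = MonoidAlgebra.single a⁻¹ ((2 : ℚ) * ((a : ZMod l).val : ℚ))
        - MonoidAlgebra.single (u2 * a⁻¹) (((a : ZMod l).val : ℚ)) := by
    intro a
    rw [sub_mul, MonoidAlgebra.single_mul_single, MonoidAlgebra.single_mul_single,
      one_mul, one_mul]
  rw [Finset.sum_congr rfl (fun a _ => hterm a), Finset.sum_sub_distrib]
  have hreindex : (∑ a : (ZMod l)ˣ, MonoidAlgebra.single (u2 * a⁻¹) (((a : ZMod l).val : ℚ)))
      = ∑ b : (ZMod l)ˣ, MonoidAlgebra.single b⁻¹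
          ((((b * u2 : (ZMod l)ˣ) : ZMod l)).val : ℚ) := by
    refine (Fintype.sum_equiv (Equiv.mulRight u2)
      (fun b => MonoidAlgebra.single b⁻¹ ((((b * u2 : (ZMod l)ˣ) : ZMod l)).val : ℚ))
      (fun a => MonoidAlgebra.single (u2 * a⁻¹) (((a : ZMod l).val : ℚ))) ?_).symm
    intro b
    simp [Equiv.mulRight, mul_inv_rev]
  rw [hreindex, ← Finset.sum_sub_distrib]
  have hcoef : ∀ b : (ZMod l)ˣ,
      MonoidAlgebra.single (b⁻¹ : (ZMod l)ˣ) ((2 : ℚ) * ((b : ZMod l).val : ℚ))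
        - MonoidAlgebra.single b⁻¹ ((((b * u2 : (ZMod l)ˣ) : ZMod l)).val : ℚ)
      = MonoidAlgebra.single b⁻¹
          ((l : ℚ) * (if l ≤ 2 * ((b : ZMod l)).val then (1 : ℚ) else 0)) := by
    intro b
    rw [← MonoidAlgebra.single_sub]
    congr 1
    rw [hvalmul b]
    set n := (b : ZMod l).val with hn
    have hnl : n < l := ZMod.val_lt _
    by_cases h : l ≤ 2 * n
    · rw [if_pos h]
      have hmod : (n * 2) % l = n * 2 - l := by
        rw [Nat.mod_eq_sub_mod (by omega), Nat.mod_eq_of_lt (by omega)]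
      rw [hmod]
      have : (↑(n * 2 - l) : ℚ) = (n : ℚ) * 2 - l := by
        push_cast [Nat.cast_sub (by omega : l ≤ n * 2)]
        ring
      rw [this]; ring
    · rw [if_neg h]
      rw [Nat.mod_eq_of_lt (by omega)]
      push_cast; ring
  rw [Finset.sum_congr rfl (fun b _ => hcoef b)]
  rw [Finset.smul_sum]
  refine Finset.sum_congr rfl (fun b _ => ?_)
  rw [MonoidAlgebra.smul_single, smul_eq_mul, inv_mul_cancel_left₀]
  exact_mod_cast (Fact.out : l.Prime).ne_zero

end Aux

theorem stmt12 (l : ℕ) [Fact (Nat.Prime l)] [NeZero l] (hl : Odd l)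
    (K L : Type*) [Field K] [NumberField K] [Field L] [NumberField L] [Algebra K L]
    (ζ : L) (hζ : IsPrimitiveRoot ζ l)
    (hgen : IntermediateField.adjoin K {ζ} = ⊤)
    (hinj : Function.Injective (hζ.autToPow K))
    (hrange : (hζ.autToPow K).range = Subgroup.zpowers (-1 : (ZMod l)ˣ))
    (act : (L ≃ₐ[K] L) → ClassGroup (𝓞 L) → ClassGroup (𝓞 L))
    (hact : IsClassGroupGalAct K L act)
    (J : L ≃ₐ[K] L) (hJ : hζ.autToPow K J = -1) :
    (∀ x ∈ stickIdeal l, ∀ f : (ZMod l)ˣ → ClassGroup (𝓞 L),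
      (∀ τ : (ZMod l)ˣ, f (-1 * τ) = act J (f τ)) →
      ∀ τ : (ZMod l)ˣ, ∏ a : (ZMod l)ˣ, f (τ * a) ^ (x.coeff a) = 1) ↔
    classNumber L = 1 := by
  classical
  have hl3 : 3 ≤ l := odd_prime_three_le hl
  have hneg : (-1 : (ZMod l)ˣ) * -1 = 1 := by rw [neg_mul_neg, one_mul]
  have hinvneg : (-1 : (ZMod l)ˣ)⁻¹ = -1 := inv_eq_of_mul_eq_one_right hneg
  constructor
  · intro h
    have hJ2 : J * J = 1 := by
      apply hinj
      rw [map_mul, map_one, hJ, neg_mul_neg, one_mul]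
    have mapNZ : ∀ (σ : L ≃ₐ[K] L) (I : (Ideal (𝓞 L))⁰),
        Ideal.map (RingOfIntegers.mapRingEquiv σ : 𝓞 L ≃+* 𝓞 L).toRingHom
          (I : Ideal (𝓞 L)) ∈ (Ideal (𝓞 L))⁰ := by
      intro σ I
      rw [mem_nonZeroDivisors_iff_ne_zero]
      have hI : (I : Ideal (𝓞 L)) ≠ 0 := mem_nonZeroDivisors_iff_ne_zero.mp I.2
      intro hcon
      apply hI
      rw [Submodule.zero_eq_bot] at hcon ⊢
      exact (Ideal.map_eq_bot_iff_of_injective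
        (fun a b hab => (RingOfIntegers.mapRingEquiv σ : 𝓞 L ≃+* 𝓞 L).injective hab)).mp hcon
    have actJ_one : act J 1 = 1 := by
      have h1 := hact J 1 (mapNZ J 1)
      rw [map_one] at h1
      rw [h1, ← map_one ClassGroup.mk0]
      congr 1
      ext : 1
      show Ideal.map _ ((1 : (Ideal (𝓞 L))⁰) : Ideal (𝓞 L))
        = ((1 : (Ideal (𝓞 L))⁰) : Ideal (𝓞 L))
      rw [OneMemClass.coe_one, Ideal.one_eq_top, Ideal.map_top]
    have actJJ : ∀ c : ClassGroup (𝓞 L), act J (act J c) = c := by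
      intro c
      obtain ⟨I, rfl⟩ := ClassGroup.mk0_surjective c
      rw [hact J I (mapNZ J I), hact J _ (mapNZ J _)]
      congr 1
      ext : 1
      show Ideal.map _ (Ideal.map _ _) = (I : Ideal (𝓞 L))
      rw [Ideal.map_map]
      have hcomp : (RingOfIntegers.mapRingEquiv J : 𝓞 L ≃+* 𝓞 L).toRingHom.comp
          (RingOfIntegers.mapRingEquiv J : 𝓞 L ≃+* 𝓞 L).toRingHom = RingHom.id (𝓞 L) := by
        ext x
        simp only [RingHom.coe_comp, Function.comp_apply, RingHom.id_apply]
        show J (J (x : L)) = (x : L)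
        rw [← AlgEquiv.mul_apply, hJ2, AlgEquiv.one_apply]
      rw [hcomp, Ideal.map_id]
    haveI : Fact (2 < l) := ⟨by omega⟩
    have hne : (-1 : (ZMod l)ˣ) ≠ 1 := by
      intro hcon
      apply (ZMod.neg_one_ne_one (n := l))
      have := congrArg (fun u : (ZMod l)ˣ => (u : ZMod l)) hcon
      simpa [Units.val_neg, Units.val_one] using this
    show Fintype.card (ClassGroup (𝓞 L)) = 1
    rw [Fintype.card_eq_one_iff]
    refine ⟨1, fun c => ?_⟩
    set f : (ZMod l)ˣ → ClassGroup (𝓞 L) :=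
      fun τ => if τ = -1 then c else if τ = 1 then act J c else 1 with hfdef
    have hf_eval : ∀ τ : (ZMod l)ˣ,
        f τ = if τ = -1 then c else if τ = 1 then act J c else 1 := fun τ => rfl
    have hf_neg : f (-1) = c := by rw [hf_eval, if_pos rfl]
    have hf_one : f 1 = act J c := by rw [hf_eval, if_neg (Ne.symm hne), if_pos rfl]
    have hf_other : ∀ τ : (ZMod l)ˣ, τ ≠ -1 → τ ≠ 1 → f τ = 1 := by
      intro τ h1 h2
      rw [hf_eval, if_neg h1, if_neg h2]
    have hf : ∀ τ : (ZMod l)ˣ, f (-1 * τ) = act J (f τ) := by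
      intro τ
      by_cases h1 : τ = 1
      · subst h1
        rw [mul_one, hf_neg, hf_one, actJJ]
      · by_cases h2 : τ = -1
        · subst h2
          rw [hneg, hf_one, hf_neg]
        · have h3 : (-1 : (ZMod l)ˣ) * τ ≠ -1 := by
            intro hcon
            exact h1 (mul_left_cancel (hcon.trans (mul_one (-1 : (ZMod l)ˣ)).symm))
          have h4 : (-1 : (ZMod l)ˣ) * τ ≠ 1 := by
            intro hcon
            exact h2 ((eq_inv_of_mul_eq_one_right hcon).trans hinvneg)
          rw [hf_other _ h3 h4, hf_other _ h2 h1, actJ_one]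
    have hx1 : (auxElt l).coeff 1 = 0 := by
      rw [auxElt_apply, if_neg]
      rw [inv_one, Units.val_one]
      haveI : Fact (1 < l) := ⟨by omega⟩
      rw [ZMod.val_one]
      omega
    have hxneg1 : (auxElt l).coeff (-1) = 1 := by
      rw [auxElt_apply, if_pos]
      have hv : ((-1 : ZMod l)).val = l - 1 := by
        have hcast : ((l - 1 : ℕ) : ZMod l) = (-1 : ZMod l) := by
          push_cast [Nat.cast_sub (by omega : 1 ≤ l)]
          rw [ZMod.natCast_self]
          ring
        rw [← hcast, ZMod.val_natCast, Nat.mod_eq_of_lt (by omega)]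
      rw [hinvneg, Units.val_neg, Units.val_one, hv]
      omega
    have hprod := h (auxElt l) (auxElt_mem hl) f hf 1
    rw [Finset.prod_eq_single (-1 : (ZMod l)ˣ) ?_ ?_] at hprod
    · rw [one_mul, hxneg1, hf_neg, zpow_one] at hprod
      exact hprod
    · intro b _ hb
      by_cases hb1 : b = 1
      · subst hb1
        rw [hx1, zpow_zero]
      · rw [one_mul, hf_other _ hb hb1, one_zpow]
    · intro hcon; exact absurd (Finset.mem_univ _) hcon
  · intro hcn x hx f hf τ
    obtain ⟨d, hd⟩ := Fintype.card_eq_one_iff.mp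
      (show Fintype.card (ClassGroup (𝓞 L)) = 1 from hcn)
    have h1 : ∀ c : ClassGroup (𝓞 L), c = 1 := fun c => (hd c).trans (hd 1).symm
    simp only [h1, one_zpow, Finset.prod_const_one]

end
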